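/- arXiv:2306.00404 — 2 statements merged into one kernel-verified Lean document; each statement's English description precedes it below -/
import Mathlib

section
/- Fix a Gamma random variable W with shape κ > 0 and scale τ > 0, constants ρ, β, d > 0, α > 0, and a rate threshold R > 0. Define C(s) = E[log₂(1 + ρβ²·d^{−α}·s^{−α}·W)] for s > 0. Then there exists a unique s* > 0 such that C(s) > R if and only if s < s*. -/
open MeasureTheory Real Set Filter

/-- Density of the Gamma distribution with shape `κ` and scale `τ`. -/
noncomputable def gammaScalePdf (κ τ w : ℝ) : ℝ :=
  w ^ (κ - 1) * Real.exp (-w / τ) / (Real.Gamma κ * τ ^ κ)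

lemma gsp_pos {κ τ : ℝ} (hκ : 0 < κ) (hτ : 0 < τ) {w : ℝ} (hw : 0 < w) :
    0 < gammaScalePdf κ τ w :=
  div_pos (mul_pos (rpow_pos_of_pos hw _) (exp_pos _))
    (mul_pos (Real.Gamma_pos_of_pos hκ) (rpow_pos_of_pos hτ _))

lemma gsp_meas (κ τ : ℝ) : Measurable (gammaScalePdf κ τ) := by
  unfold gammaScalePdf
  fun_prop

lemma int_rpow_exp {τ : ℝ} (hτ : 0 < τ) {s : ℝ} (hs : -1 < s) :
    IntegrableOn (fun w => w ^ s * Real.exp (-w / τ)) (Ioi (0:ℝ)) := by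
  have h := integrableOn_rpow_mul_exp_neg_mul_rpow hs (one_pos : (0:ℝ) < 1) (show (0:ℝ) < 1/τ by positivity)
  refine h.congr_fun (fun x hx => ?_) measurableSet_Ioi
  dsimp only
  rw [rpow_one]
  congr 1
  field_simp

lemma gsp_int {κ τ : ℝ} (hκ : 0 < κ) (hτ : 0 < τ) :
    IntegrableOn (gammaScalePdf κ τ) (Ioi (0:ℝ)) := by
  unfold gammaScalePdf
  exact (int_rpow_exp hτ (by linarith : (-1:ℝ) < κ - 1)).div_const _

lemma gsp_mul_int {κ τ : ℝ} (hκ : 0 < κ) (hτ : 0 < τ) :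
    IntegrableOn (fun w => w * gammaScalePdf κ τ w) (Ioi (0:ℝ)) := by
  refine IntegrableOn.congr_fun
    (f := fun x => x ^ κ * Real.exp (-x / τ) / (Real.Gamma κ * τ ^ κ))
    ((int_rpow_exp hτ (by linarith : (-1:ℝ) < κ)).div_const _)
    (fun x hx => ?_) measurableSet_Ioi
  unfold gammaScalePdf
  have hx0 : x ≠ 0 := ne_of_gt hx
  have hG : Real.Gamma κ ≠ 0 := (Real.Gamma_pos_of_pos hκ).ne'
  have hτκ : (τ:ℝ) ^ κ ≠ 0 := (rpow_pos_of_pos hτ κ).ne'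
  rw [Real.rpow_sub_one hx0]
  field_simp

lemma logb_le_aux {a w : ℝ} (ha : 0 < a) (hw : 0 < w) :
    Real.logb 2 (1 + a * w) ≤ a * w / Real.log 2 := by
  rw [Real.logb]
  have h1 : (0:ℝ) < 1 + a * w := by nlinarith
  have h2 : Real.log (1 + a * w) ≤ a * w := by
    have := Real.log_le_sub_one_of_pos h1
    linarith
  have h3 : (0:ℝ) < Real.log 2 := Real.log_pos one_lt_two
  gcongr

lemma logb_nonneg_aux {a w : ℝ} (ha : 0 < a) (hw : 0 < w) :
    0 ≤ Real.logb 2 (1 + a * w) :=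
  Real.logb_nonneg one_lt_two (by nlinarith)

lemma integrand_meas (κ τ a : ℝ) :
    AEStronglyMeasurable (fun w => Real.logb 2 (1 + a * w) * gammaScalePdf κ τ w)
      (volume.restrict (Ioi 0)) := by
  apply Measurable.aestronglyMeasurable
  apply Measurable.mul ?_ (gsp_meas κ τ)
  unfold Real.logb
  exact (Real.measurable_log.comp (measurable_const.add (measurable_id.const_mul a))).div_const _

lemma integrand_int {κ τ : ℝ} (hκ : 0 < κ) (hτ : 0 < τ) {a : ℝ} (ha : 0 < a) :
    IntegrableOn (fun w => Real.logb 2 (1 + a * w) * gammaScalePdf κ τ w) (Ioi (0:ℝ)) := by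
  apply Integrable.mono' (((gsp_mul_int hκ hτ).const_mul (a / Real.log 2)))
    (integrand_meas κ τ a)
  rw [ae_restrict_iff' measurableSet_Ioi]
  filter_upwards with w hw
  have hw' : (0:ℝ) < w := hw
  have hg := (gsp_pos hκ hτ hw').le
  rw [Real.norm_eq_abs, abs_of_nonneg (mul_nonneg (logb_nonneg_aux ha hw') hg)]
  calc Real.logb 2 (1 + a * w) * gammaScalePdf κ τ w
      ≤ (a * w / Real.log 2) * gammaScalePdf κ τ w := by
        gcongr; exact logb_le_aux ha hw'
    _ = a / Real.log 2 * (w * gammaScalePdf κ τ w) := by ring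

lemma F_strictMono {κ τ : ℝ} (hκ : 0 < κ) (hτ : 0 < τ) {a b : ℝ}
    (ha : 0 < a) (hab : a < b) :
    (∫ w in Ioi (0:ℝ), Real.logb 2 (1 + a * w) * gammaScalePdf κ τ w) <
      ∫ w in Ioi (0:ℝ), Real.logb 2 (1 + b * w) * gammaScalePdf κ τ w := by
  have hb : 0 < b := ha.trans hab
  set f : ℝ → ℝ := fun w =>
    (Real.logb 2 (1 + b * w) - Real.logb 2 (1 + a * w)) * gammaScalePdf κ τ w with hf
  have hfpos : ∀ w ∈ Ioi (0:ℝ), 0 < f w := by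
    intro w hw
    have hw' : (0:ℝ) < w := hw
    apply mul_pos _ (gsp_pos hκ hτ hw')
    rw [sub_pos]
    apply Real.logb_lt_logb one_lt_two (by nlinarith)
    nlinarith
  have hfi : IntegrableOn f (Ioi (0:ℝ)) := by
    refine IntegrableOn.congr_fun (f := fun w =>
        Real.logb 2 (1 + b * w) * gammaScalePdf κ τ w -
          Real.logb 2 (1 + a * w) * gammaScalePdf κ τ w)
      ((integrand_int hκ hτ hb).sub (integrand_int hκ hτ ha))
      (fun w hw => ?_) measurableSet_Ioi
    simp only [hf]; ring
  have hpos : 0 < ∫ w in Ioi (0:ℝ), f w := by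
    rw [setIntegral_pos_iff_support_of_nonneg_ae _ hfi]
    · have hsub : Ioi (0:ℝ) ⊆ Function.support f ∩ Ioi 0 :=
        fun w hw => ⟨(hfpos w hw).ne', hw⟩
      have h1 : (0:ENNReal) < volume (Ioi (0:ℝ)) := by simp [Real.volume_Ioi]
      exact h1.trans_le (measure_mono hsub)
    · exact (ae_restrict_mem measurableSet_Ioi).mono (fun w hw => (hfpos w hw).le)
  have heq : (∫ w in Ioi (0:ℝ), f w) =
      (∫ w in Ioi (0:ℝ), Real.logb 2 (1 + b * w) * gammaScalePdf κ τ w) -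
        ∫ w in Ioi (0:ℝ), Real.logb 2 (1 + a * w) * gammaScalePdf κ τ w := by
    rw [← integral_sub (integrand_int hκ hτ hb) (integrand_int hκ hτ ha)]
    apply setIntegral_congr_fun measurableSet_Ioi
    intro w hw
    simp only [hf]; ring
  rw [heq] at hpos
  linarith

lemma F_cont {κ τ : ℝ} (hκ : 0 < κ) (hτ : 0 < τ) {a₀ : ℝ} (ha₀ : 0 < a₀) :
    ContinuousAt (fun a => ∫ w in Ioi (0:ℝ),
      Real.logb 2 (1 + a * w) * gammaScalePdf κ τ w) a₀ := by
  apply continuousAt_of_dominated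
    (bound := fun w => ((a₀ + 1) / Real.log 2) * (w * gammaScalePdf κ τ w))
  · filter_upwards with a using integrand_meas κ τ a
  · have hmem : Ioo (0:ℝ) (a₀ + 1) ∈ nhds a₀ := Ioo_mem_nhds ha₀ (lt_add_one _)
    filter_upwards [hmem] with a ha
    rw [ae_restrict_iff' measurableSet_Ioi]
    filter_upwards with w hw
    have hw' : (0:ℝ) < w := hw
    have hap : (0:ℝ) < a := ha.1
    have hg := (gsp_pos hκ hτ hw').le
    have hlog2 : (0:ℝ) < Real.log 2 := Real.log_pos one_lt_two
    rw [Real.norm_eq_abs, abs_of_nonneg (mul_nonneg (logb_nonneg_aux hap hw') hg)]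
    calc Real.logb 2 (1 + a * w) * gammaScalePdf κ τ w
        ≤ (a * w / Real.log 2) * gammaScalePdf κ τ w := by
          gcongr; exact logb_le_aux hap hw'
      _ ≤ ((a₀ + 1) * w / Real.log 2) * gammaScalePdf κ τ w := by
          gcongr; exact ha.2.le
      _ = ((a₀ + 1) / Real.log 2) * (w * gammaScalePdf κ τ w) := by ring
  · exact (gsp_mul_int hκ hτ).const_mul _
  · rw [ae_restrict_iff' measurableSet_Ioi]
    filter_upwards with w hw
    have hw' : (0:ℝ) < w := hw
    apply ContinuousAt.mul _ continuousAt_const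
    have h1 : (1:ℝ) + a₀ * w ≠ 0 := by nlinarith
    exact ContinuousAt.comp (g := Real.logb 2) (Real.continuousAt_logb h1) (by fun_prop)

lemma F_le {κ τ : ℝ} (hκ : 0 < κ) (hτ : 0 < τ) {a : ℝ} (ha : 0 < a) :
    (∫ w in Ioi (0:ℝ), Real.logb 2 (1 + a * w) * gammaScalePdf κ τ w) ≤
      (a / Real.log 2) * ∫ w in Ioi (0:ℝ), w * gammaScalePdf κ τ w := by
  rw [← integral_const_mul]
  refine setIntegral_mono_on (hf := integrand_int hκ hτ ha)
    (hg := (gsp_mul_int hκ hτ).const_mul _) measurableSet_Ioi (fun w hw => ?_)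
  have hw' : (0:ℝ) < w := hw
  have hg := (gsp_pos hκ hτ hw').le
  calc Real.logb 2 (1 + a * w) * gammaScalePdf κ τ w
      ≤ (a * w / Real.log 2) * gammaScalePdf κ τ w := by
        gcongr; exact logb_le_aux ha hw'
    _ = a / Real.log 2 * (w * gammaScalePdf κ τ w) := by ring

lemma F_exists_gt {κ τ : ℝ} (hκ : 0 < κ) (hτ : 0 < τ) (R : ℝ) :
    ∃ a : ℝ, 0 < a ∧
      R < ∫ w in Ioi (0:ℝ), Real.logb 2 (1 + a * w) * gammaScalePdf κ τ w := by
  have hsub : Ici (1:ℝ) ⊆ Ioi 0 := fun w hw => mem_Ioi.mpr (lt_of_lt_of_le one_pos hw)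
  set P : ℝ := ∫ w in Ici (1:ℝ), gammaScalePdf κ τ w with hP
  have hPint : IntegrableOn (gammaScalePdf κ τ) (Ici (1:ℝ)) := (gsp_int hκ hτ).mono_set hsub
  have hPpos : 0 < P := by
    rw [hP, setIntegral_pos_iff_support_of_nonneg_ae _ hPint]
    · have h1 : (0:ENNReal) < volume (Ici (1:ℝ)) := by simp [Real.volume_Ici]
      exact h1.trans_le (measure_mono fun w hw =>
        ⟨(gsp_pos hκ hτ (hsub hw)).ne', hw⟩)
    · exact (ae_restrict_mem measurableSet_Ici).mono
        (fun w hw => (gsp_pos hκ hτ (hsub hw)).le)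
  set a : ℝ := (2:ℝ) ^ (R / P) with haDef
  have hapos : 0 < a := rpow_pos_of_pos two_pos _
  refine ⟨a, hapos, ?_⟩
  have step1 : (∫ w in Ici (1:ℝ), Real.logb 2 (1 + a * w) * gammaScalePdf κ τ w) ≤
      ∫ w in Ioi (0:ℝ), Real.logb 2 (1 + a * w) * gammaScalePdf κ τ w := by
    refine setIntegral_mono_set (integrand_int hκ hτ hapos) ?_
      (HasSubset.Subset.eventuallyLE hsub)
    exact (ae_restrict_mem measurableSet_Ioi).mono (fun w hw =>
      mul_nonneg (logb_nonneg_aux hapos hw) (gsp_pos hκ hτ hw).le)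
  have step2 : Real.logb 2 (1 + a) * P ≤
      ∫ w in Ici (1:ℝ), Real.logb 2 (1 + a * w) * gammaScalePdf κ τ w := by
    rw [hP, ← integral_const_mul]
    refine setIntegral_mono_on (hf := hPint.const_mul _)
      (hg := (integrand_int hκ hτ hapos).mono_set hsub) measurableSet_Ici (fun w hw => ?_)
    have hw1 : (1:ℝ) ≤ w := hw
    have hwpos : (0:ℝ) < w := hsub hw
    have haw : a ≤ a * w := by nlinarith [mul_nonneg hapos.le (sub_nonneg.mpr hw1)]
    refine mul_le_mul_of_nonneg_right ?_ (gsp_pos hκ hτ hwpos).le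
    exact Real.logb_le_logb_of_le one_lt_two (by linarith) (by linarith)
  have step3 : R / P < Real.logb 2 (1 + a) := by
    have h1 : Real.logb 2 a = R / P := by
      rw [haDef, Real.logb_rpow (by norm_num) (by norm_num)]
    rw [← h1]
    exact Real.logb_lt_logb one_lt_two hapos (by linarith)
  have : R < Real.logb 2 (1 + a) * P := (div_lt_iff₀ hPpos).mp step3
  linarith

theorem coverage_region_is_interval (κ τ ρ β d α R : ℝ)
    (hκ : 0 < κ) (hτ : 0 < τ) (hρ : 0 < ρ) (hβ : 0 < β) (hd : 0 < d)
    (hα : 0 < α) (hR : 0 < R) :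
    ∃! s : ℝ, 0 < s ∧ ∀ t : ℝ, 0 < t →
      ((∫ w in Set.Ioi (0 : ℝ),
          Real.logb 2 (1 + ρ * β ^ 2 * d ^ (-α) * t ^ (-α) * w) *
            gammaScalePdf κ τ w) > R ↔ t < s) := by
  set c : ℝ := ρ * β ^ 2 * d ^ (-α) with hc
  have hcpos : 0 < c := by
    have := Real.rpow_pos_of_pos hd (-α)
    positivity
  -- small a with F a < R
  set M : ℝ := ∫ w in Ioi (0:ℝ), w * gammaScalePdf κ τ w with hM
  have hMnn : 0 ≤ M := setIntegral_nonneg measurableSet_Ioi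
    (fun w hw => mul_nonneg (le_of_lt hw) (gsp_pos hκ hτ hw).le)
  have hlog2 : (0:ℝ) < Real.log 2 := Real.log_pos one_lt_two
  set a₀ : ℝ := R * Real.log 2 / (M + 1) with ha₀def
  have ha₀pos : 0 < a₀ := by positivity
  have hFa₀ : (∫ w in Ioi (0:ℝ), Real.logb 2 (1 + a₀ * w) * gammaScalePdf κ τ w) < R := by
    refine lt_of_le_of_lt (F_le hκ hτ ha₀pos) ?_
    rw [ha₀def]
    have heq : R * Real.log 2 / (M + 1) / Real.log 2 * M = R * M / (M + 1) := by
      field_simp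
    rw [heq, div_lt_iff₀ (by linarith : (0:ℝ) < M + 1)]
    nlinarith
  -- large a with F a > R
  obtain ⟨a₁, ha₁pos, hFa₁⟩ := F_exists_gt hκ hτ R
  have ha₀₁ : a₀ < a₁ := by
    by_contra h
    push_neg at h
    rcases eq_or_lt_of_le h with h | h
    · rw [h] at hFa₁; linarith
    · have := F_strictMono hκ hτ ha₁pos h
      linarith
  -- IVT
  have hcont : ContinuousOn
      (fun a => ∫ w in Ioi (0:ℝ), Real.logb 2 (1 + a * w) * gammaScalePdf κ τ w)
      (Icc a₀ a₁) := fun x hx =>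
    (F_cont hκ hτ (lt_of_lt_of_le ha₀pos hx.1)).continuousWithinAt
  obtain ⟨A, hAmem, hAeq⟩ := intermediate_value_Icc ha₀₁.le hcont
    (Set.mem_Icc.mpr ⟨hFa₀.le, hFa₁.le⟩)
  have hApos : 0 < A := lt_of_lt_of_le ha₀pos hAmem.1
  have hAeq : (∫ w in Ioi (0:ℝ), Real.logb 2 (1 + A * w) * gammaScalePdf κ τ w) = R := hAeq
  -- key characterization
  have key : ∀ x : ℝ, 0 < x →
      ((∫ w in Ioi (0:ℝ), Real.logb 2 (1 + x * w) * gammaScalePdf κ τ w) > R ↔ A < x) := by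
    intro x hx
    constructor
    · intro hgt
      by_contra h
      push_neg at h
      rcases eq_or_lt_of_le h with h | h
      · rw [← h] at hAeq; linarith
      · have := F_strictMono hκ hτ hx h
        rw [hAeq] at this; linarith
    · intro h
      have := F_strictMono hκ hτ hApos h
      rw [hAeq] at this; linarith
  refine ⟨(c / A) ^ α⁻¹, ⟨rpow_pos_of_pos (div_pos hcpos hApos) _, fun t ht => ?_⟩,
    fun s' hs' => ?_⟩
  · have hx : 0 < c * t ^ (-α) := mul_pos hcpos (rpow_pos_of_pos ht _)
    rw [key (c * t ^ (-α)) hx]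
    rw [Real.rpow_neg ht.le, ← div_eq_mul_inv, lt_div_iff₀ (rpow_pos_of_pos ht α),
      lt_rpow_inv_iff_of_pos ht.le (div_nonneg hcpos.le hApos.le) hα,
      lt_div_iff₀ hApos, mul_comm]
  · obtain ⟨hs'pos, hs'iff⟩ := hs'
    by_contra hne
    rcases lt_or_gt_of_ne hne with h | h
    · -- s' < s*
      have h1 : (∫ w in Ioi (0:ℝ),
          Real.logb 2 (1 + c * s' ^ (-α) * w) * gammaScalePdf κ τ w) > R := by
        have hx : 0 < c * s' ^ (-α) := mul_pos hcpos (rpow_pos_of_pos hs'pos _)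
        rw [key _ hx, Real.rpow_neg hs'pos.le, ← div_eq_mul_inv,
          lt_div_iff₀ (rpow_pos_of_pos hs'pos α)]
        have := (lt_rpow_inv_iff_of_pos hs'pos.le (div_nonneg hcpos.le hApos.le) hα).mp h
        rw [lt_div_iff₀ hApos] at this
        linarith [this, mul_comm A (s' ^ α)]
      exact absurd ((hs'iff s' hs'pos).mp h1) (lt_irrefl s')
    · -- s* < s'
      set sstar := (c / A) ^ α⁻¹ with hsdef
      have hspos : 0 < sstar := rpow_pos_of_pos (div_pos hcpos hApos) _
      have h1 : (∫ w in Ioi (0:ℝ),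
          Real.logb 2 (1 + c * sstar ^ (-α) * w) * gammaScalePdf κ τ w) > R :=
        (hs'iff sstar hspos).mpr h
      have hx : 0 < c * sstar ^ (-α) := mul_pos hcpos (rpow_pos_of_pos hspos _)
      have h2 := (key _ hx).mp h1
      -- but c * sstar^(-α) = A, contradiction
      have h3 : sstar ^ α = c / A :=
        Real.rpow_inv_rpow (div_pos hcpos hApos).le hα.ne'
      have h4 : c * sstar ^ (-α) = A := by
        rw [Real.rpow_neg hspos.le, h3]
        field_simp
      rw [h4] at h2
      exact absurd h2 (lt_irrefl A)
end

section
/- Let W be Gamma(κ, τ) with κ, τ > 0, and let 0 < p_r < 1. The map c ↦ E[log(1 + c·W)] − E[log(1 + p_r·c·W)] on (0,∞) is strictly increasing in c. -/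
open MeasureTheory Real

lemma gammaScalePdf_pos {κ τ w : ℝ} (hκ : 0 < κ) (hτ : 0 < τ) (hw : 0 < w) :
    0 < gammaScalePdf κ τ w := by
  unfold gammaScalePdf
  have h1 : 0 < Real.Gamma κ := Real.Gamma_pos_of_pos hκ
  positivity

lemma integrable_log_mul_gammaScalePdf {κ τ c : ℝ} (hκ : 0 < κ) (hτ : 0 < τ) (hc : 0 ≤ c) :
    IntegrableOn (fun w => Real.log (1 + c * w) * gammaScalePdf κ τ w) (Set.Ioi (0:ℝ)) := by
  have hΓ : 0 < Real.Gamma κ := Real.Gamma_pos_of_pos hκ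
  have hC : 0 < Real.Gamma κ * τ ^ κ := by positivity
  have hg : IntegrableOn
      (fun w : ℝ => (c / (Real.Gamma κ * τ ^ κ)) * (w ^ κ * Real.exp (-τ⁻¹ * w)))
      (Set.Ioi (0:ℝ)) := by
    apply Integrable.const_mul
    have h := integrableOn_rpow_mul_exp_neg_mul_rpow (p := 1) (s := κ) (b := τ⁻¹)
      (by linarith) zero_lt_one (by positivity)
    exact (h.congr_fun (fun x hx => by simp only [Real.rpow_one]) measurableSet_Ioi)
  refine Integrable.mono' hg ?_ ?_
  · apply ContinuousOn.aestronglyMeasurable _ measurableSet_Ioi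
    unfold gammaScalePdf
    apply ContinuousOn.mul
    · apply ContinuousOn.log (by fun_prop)
      intro w hw
      have : (0:ℝ) < w := hw
      nlinarith
    · apply ContinuousOn.div_const
      apply ContinuousOn.mul
      · exact ContinuousOn.rpow_const continuousOn_id fun w hw => Or.inl (ne_of_gt hw)
      · fun_prop
  · filter_upwards [self_mem_ae_restrict measurableSet_Ioi] with w hw
    have hw0 : 0 < w := hw
    have hlog0 : 0 ≤ Real.log (1 + c * w) := Real.log_nonneg (by nlinarith)
    have hlogle : Real.log (1 + c * w) ≤ c * w := by
      have := Real.log_le_sub_one_of_pos (show 0 < 1 + c * w by nlinarith)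
      linarith
    have hpdf : 0 < gammaScalePdf κ τ w := gammaScalePdf_pos hκ hτ hw0
    have hkey : (c / (Real.Gamma κ * τ ^ κ)) * (w ^ κ * Real.exp (-τ⁻¹ * w))
        = (c * w) * gammaScalePdf κ τ w := by
      unfold gammaScalePdf
      have h1 : w ^ (κ - 1) = w ^ κ / w := by
        rw [Real.rpow_sub hw0, Real.rpow_one]
      have h2 : (-τ⁻¹ * w : ℝ) = -w / τ := by field_simp
      rw [h1, h2]
      field_simp
    rw [Real.norm_eq_abs, abs_of_nonneg (mul_nonneg hlog0 hpdf.le), hkey]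
    exact mul_le_mul_of_nonneg_right hlogle hpdf.le

theorem noma_weak_rate_strictMono (κ τ p_r : ℝ)
    (hκ : 0 < κ) (hτ : 0 < τ) (hpr0 : 0 < p_r) (hpr1 : p_r < 1) :
    StrictMonoOn
      (fun c =>
        (∫ w in Set.Ioi (0 : ℝ), Real.log (1 + c * w) * gammaScalePdf κ τ w) -
        (∫ w in Set.Ioi (0 : ℝ), Real.log (1 + p_r * c * w) * gammaScalePdf κ τ w))
      (Set.Ioi 0) := by
  intro a ha b hb hab
  have ha0 : (0:ℝ) < a := ha
  have hb0 : (0:ℝ) < b := hb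
  have Ia := integrable_log_mul_gammaScalePdf (c := a) hκ hτ ha0.le
  have Ib := integrable_log_mul_gammaScalePdf (c := b) hκ hτ hb0.le
  have Ipa := integrable_log_mul_gammaScalePdf (c := p_r * a) hκ hτ (by positivity)
  have Ipb := integrable_log_mul_gammaScalePdf (c := p_r * b) hκ hτ (by positivity)
  have Iba : IntegrableOn (fun w => Real.log (1 + b * w) * gammaScalePdf κ τ w -
      Real.log (1 + a * w) * gammaScalePdf κ τ w) (Set.Ioi (0:ℝ)) := Ib.sub Ia
  have Ipba : IntegrableOn (fun w => Real.log (1 + p_r * b * w) * gammaScalePdf κ τ w -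
      Real.log (1 + p_r * a * w) * gammaScalePdf κ τ w) (Set.Ioi (0:ℝ)) := Ipb.sub Ipa
  have hint : IntegrableOn (fun w =>
      (Real.log (1 + b * w) * gammaScalePdf κ τ w - Real.log (1 + a * w) * gammaScalePdf κ τ w) -
      (Real.log (1 + p_r * b * w) * gammaScalePdf κ τ w -
        Real.log (1 + p_r * a * w) * gammaScalePdf κ τ w)) (Set.Ioi (0:ℝ)) := Iba.sub Ipba
  have hpos : ∀ w ∈ Set.Ioi (0:ℝ), 0 <
      (Real.log (1 + b * w) * gammaScalePdf κ τ w - Real.log (1 + a * w) * gammaScalePdf κ τ w) -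
      (Real.log (1 + p_r * b * w) * gammaScalePdf κ τ w -
        Real.log (1 + p_r * a * w) * gammaScalePdf κ τ w) := by
    intro w hw
    have hw0 : (0:ℝ) < w := hw
    have hpdf : 0 < gammaScalePdf κ τ w := gammaScalePdf_pos hκ hτ hw0
    have h1 : 0 < 1 + a * w := by nlinarith
    have h2 : 0 < 1 + b * w := by nlinarith
    have h3 : 0 < 1 + p_r * a * w := by nlinarith
    have h4 : 0 < 1 + p_r * b * w := by nlinarith
    have hprod : (1 + a * w) * (1 + p_r * b * w) < (1 + b * w) * (1 + p_r * a * w) := by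
      nlinarith [mul_pos (sub_pos.2 hab) hw0]
    have hlog : Real.log ((1 + a * w) * (1 + p_r * b * w)) <
        Real.log ((1 + b * w) * (1 + p_r * a * w)) :=
      Real.log_lt_log (by positivity) hprod
    rw [Real.log_mul h1.ne' h4.ne', Real.log_mul h2.ne' h3.ne'] at hlog
    have hd : 0 < (Real.log (1 + b * w) - Real.log (1 + a * w) -
        (Real.log (1 + p_r * b * w) - Real.log (1 + p_r * a * w))) := by linarith
    calc (0:ℝ) < (Real.log (1 + b * w) - Real.log (1 + a * w) -
        (Real.log (1 + p_r * b * w) - Real.log (1 + p_r * a * w))) * gammaScalePdf κ τ w :=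
          mul_pos hd hpdf
      _ = _ := by ring
  simp only
  rw [← sub_pos, sub_sub_sub_comm, ← integral_sub Ib Ia, ← integral_sub Ipb Ipa,
    ← integral_sub Iba Ipba]
  rw [setIntegral_pos_iff_support_of_nonneg_ae]
  · refine lt_of_lt_of_le ?_ (measure_mono (show Set.Ioi (0:ℝ) ⊆ _ ∩ Set.Ioi 0 from
      fun w hw => ⟨(hpos w hw).ne', hw⟩))
    simp
  · filter_upwards [self_mem_ae_restrict measurableSet_Ioi] with w hw
    exact (hpos w hw).le
  · exact hint
end
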